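/- Let X ⊂ ℝ^d be a compact convex set with nonempty interior and let e be a fixed unit vector. Let T_e be the Markov kernel on X given by T_e(x, ·) = ν_{x,e}, the uniform probability measure on the chord of X through x in direction e. Then the uniform probability measure on X (normalized d-dimensional Lebesgue measure restricted to X) is invariant under T_e. -/

import Mathlib

open MeasureTheory Set
open scoped ENNReal

/-- The uniform probability measure `ν_{x,e}` on the chord `{x + t·e : t ∈ ℝ} ∩ X` of `X`
through `x` in direction `e` (a unit vector): it is the pushforward under `t ↦ x + t·e` of
the normalized Lebesgue measure on the parameter set `{t : x + t·e ∈ X}`, or the Dirac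
mass at `x` if the chord is degenerate. -/
noncomputable def chordMeasure {d : ℕ} (X : Set (EuclideanSpace ℝ (Fin d)))
    (e x : EuclideanSpace ℝ (Fin d)) : Measure (EuclideanSpace ℝ (Fin d)) :=
  if volume {t : ℝ | x + t • e ∈ X} = 0 then Measure.dirac x
  else (volume {t : ℝ | x + t • e ∈ X})⁻¹ •
    Measure.map (fun t : ℝ => x + t • e) (volume.restrict {t : ℝ | x + t • e ∈ X})

/-- The uniform probability measure on `X`: normalized Lebesgue measure restricted to `X`. -/
noncomputable def uniformOn {d : ℕ} (X : Set (EuclideanSpace ℝ (Fin d))) :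
    Measure (EuclideanSpace ℝ (Fin d)) :=
  (volume X)⁻¹ • volume.restrict X

namespace ChordAux

variable {d : ℕ}

local notation "E" => EuclideanSpace ℝ (Fin d)

/-- slice volume of `B` along the line through `x` in direction `e`. -/
noncomputable def sl (e : E) (B : Set E) (x : E) : ℝ≥0∞ :=
  volume {t : ℝ | x + t • e ∈ B}

lemma meas_param (e x : E) : Measurable fun t : ℝ => x + t • e :=
  measurable_const.add (measurable_id.smul_const e)

lemma meas_param2 (e : E) : Measurable fun p : E × ℝ => p.1 + p.2 • e :=
  measurable_fst.add (measurable_snd.smul_const e)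

lemma sl_meas (e : E) {B : Set E} (hB : MeasurableSet B) : Measurable (sl e B) := by
  have h := measurable_measure_prodMk_left (ν := (volume : Measure ℝ))
    ((meas_param2 e) hB)
  exact h

lemma sl_translate (e : E) (B : Set E) (x : E) (s : ℝ) :
    sl e B (x + s • e) = sl e B x := by
  have h : {t : ℝ | x + s • e + t • e ∈ B} = (fun t => s + t) ⁻¹' {t : ℝ | x + t • e ∈ B} := by
    ext t
    simp only [Set.mem_setOf_eq, Set.mem_preimage, add_assoc, ← add_smul]
  rw [sl, h, measure_preimage_add]
  rfl

lemma sl_mono (e : E) {B C : Set E} (h : B ⊆ C) (x : E) : sl e B x ≤ sl e C x :=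
  measure_mono fun t ht => h ht

lemma sl_ne_top {R : ℝ} {X : Set E} (hXR : X ⊆ Metric.closedBall 0 R)
    {e : E} (he : ‖e‖ = 1) (x : E) : sl e X x ≠ ∞ := by
  have hsub : {t : ℝ | x + t • e ∈ X} ⊆ Icc (-(R + ‖x‖)) (R + ‖x‖) := by
    intro t ht
    have h1 : ‖x + t • e‖ ≤ R := by
      simpa [Metric.mem_closedBall, dist_zero_right] using hXR ht
    have h2 : |t| = ‖t • e‖ := by
      rw [norm_smul, he, Real.norm_eq_abs, mul_one]
    have h3 : ‖t • e‖ ≤ ‖x + t • e‖ + ‖x‖ := by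
      calc ‖t • e‖ = ‖(x + t • e) - x‖ := by
            congr 1; abel
        _ ≤ ‖x + t • e‖ + ‖x‖ := norm_sub_le _ _
    have h4 : |t| ≤ R + ‖x‖ := by rw [h2]; linarith
    exact abs_le.mp h4
  have hfin : volume (Icc (-(R + ‖x‖)) (R + ‖x‖)) ≠ ∞ := by
    rw [Real.volume_Icc]; exact ENNReal.ofReal_ne_top
  exact ne_top_of_le_ne_top hfin (measure_mono hsub)

lemma chord_apply {X : Set E} (e : E) {A : Set E} (hA : MeasurableSet A) (x : E)
    (hL : sl e X x ≠ 0) :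
    chordMeasure X e x A = (sl e X x)⁻¹ * sl e (X ∩ A) x := by
  rw [chordMeasure, show volume {t : ℝ | x + t • e ∈ X} = sl e X x from rfl,
    if_neg hL, Measure.smul_apply, smul_eq_mul,
    Measure.map_apply (meas_param e x) hA,
    Measure.restrict_apply (meas_param e x hA)]
  have hset : (fun t : ℝ => x + t • e) ⁻¹' A ∩ {t : ℝ | x + t • e ∈ X} =
      {t : ℝ | x + t • e ∈ X ∩ A} := by
    ext t
    simp only [Set.mem_inter_iff, Set.mem_preimage, Set.mem_setOf_eq]
    tauto
  rw [hset]
  rfl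

lemma chord_le_one {R : ℝ} {X : Set E} (hXR : X ⊆ Metric.closedBall 0 R)
    {e : E} (he : ‖e‖ = 1) {A : Set E} (hA : MeasurableSet A) (x : E) :
    chordMeasure X e x A ≤ 1 := by
  by_cases hL : sl e X x = 0
  · rw [chordMeasure]
    rw [show volume {t : ℝ | x + t • e ∈ X} = sl e X x from rfl, if_pos hL]
    exact prob_le_one
  · rw [chord_apply e hA x hL]
    calc (sl e X x)⁻¹ * sl e (X ∩ A) x ≤ (sl e X x)⁻¹ * sl e X x :=
          mul_le_mul_right (sl_mono e inter_subset_left x) _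
      _ = 1 := ENNReal.inv_mul_cancel hL (sl_ne_top hXR he x)

lemma chord_meas {X : Set E} (hX : MeasurableSet X) (e : E) {A : Set E}
    (hA : MeasurableSet A) :
    Measurable fun x : E => chordMeasure X e x A := by
  have hrw : (fun x : E => chordMeasure X e x A) =
      fun x => if sl e X x = 0 then A.indicator 1 x
        else (sl e X x)⁻¹ * sl e (X ∩ A) x := by
    funext x
    by_cases hL : sl e X x = 0
    · rw [if_pos hL, chordMeasure,
        show volume {t : ℝ | x + t • e ∈ X} = sl e X x from rfl, if_pos hL,
        Measure.dirac_apply' x hA]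
    · rw [if_neg hL, chord_apply e hA x hL]
  rw [hrw]
  apply Measurable.ite
  · exact (sl_meas e hX) (measurableSet_singleton 0)
  · exact measurable_one.indicator hA
  · exact (sl_meas e hX).inv.mul (sl_meas e (hX.inter hA))

lemma indicator_line {B : Set E} (e x : E) (t : ℝ) :
    B.indicator (1 : E → ℝ≥0∞) (x + t • e) =
      {s : ℝ | x + s • e ∈ B}.indicator (fun _ => (1 : ℝ≥0∞)) t := by
  by_cases h : x + t • e ∈ B
  · rw [Set.indicator_of_mem h, Set.indicator_of_mem (by exact h)]; rfl
  · rw [Set.indicator_of_notMem h, Set.indicator_of_notMem (by exact h)]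

lemma line_integral_indicator {B : Set E} (hB : MeasurableSet B) (e x : E) :
    ∫⁻ t : ℝ, B.indicator (1 : E → ℝ≥0∞) (x + t • e) = sl e B x := by
  calc ∫⁻ t : ℝ, B.indicator (1 : E → ℝ≥0∞) (x + t • e)
      = ∫⁻ t : ℝ, {s : ℝ | x + s • e ∈ B}.indicator (fun _ => (1 : ℝ≥0∞)) t :=
        lintegral_congr fun t => indicator_line e x t
    _ = sl e B x := lintegral_indicator_one (meas_param e x hB)

lemma line_integral_chord {R : ℝ} {X : Set E} (hX : MeasurableSet X)
    (hXR : X ⊆ Metric.closedBall 0 R) {e : E} (he : ‖e‖ = 1)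
    {A : Set E} (hA : MeasurableSet A) (x : E) :
    ∫⁻ t : ℝ, X.indicator (fun y => chordMeasure X e y A) (x + t • e) =
      sl e (X ∩ A) x := by
  have hpre : MeasurableSet {t : ℝ | x + t • e ∈ X} := meas_param e x hX
  have hrw : ∀ t : ℝ, X.indicator (fun y => chordMeasure X e y A) (x + t • e) =
      {s : ℝ | x + s • e ∈ X}.indicator (fun s => chordMeasure X e (x + s • e) A) t := by
    intro t
    by_cases h : x + t • e ∈ X
    · rw [Set.indicator_of_mem h, Set.indicator_of_mem (by exact h)]
    · rw [Set.indicator_of_notMem h, Set.indicator_of_notMem (by exact h)]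
  rw [lintegral_congr hrw, lintegral_indicator hpre]
  by_cases hL : sl e X x = 0
  · have h1 : sl e (X ∩ A) x = 0 :=
      le_antisymm (hL ▸ sl_mono e inter_subset_left x) zero_le
    have h2 : ∫⁻ t in {s : ℝ | x + s • e ∈ X}, chordMeasure X e (x + t • e) A ≤
        ∫⁻ _ in {s : ℝ | x + s • e ∈ X}, (1 : ℝ≥0∞) :=
      lintegral_mono fun t => chord_le_one hXR he hA _
    rw [setLIntegral_const, one_mul] at h2
    have h3 : volume {s : ℝ | x + s • e ∈ X} = 0 := hL
    rw [h1]
    exact le_antisymm (h2.trans (le_of_eq h3)) zero_le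
  · have hconst : ∀ t ∈ {s : ℝ | x + s • e ∈ X},
        chordMeasure X e (x + t • e) A = (sl e X x)⁻¹ * sl e (X ∩ A) x := by
      intro t _
      rw [chord_apply e hA _ (by rw [sl_translate]; exact hL),
        sl_translate, sl_translate]
    rw [setLIntegral_congr_fun hpre hconst,
      setLIntegral_const]
    rw [show volume {s : ℝ | x + s • e ∈ X} = sl e X x from rfl,
      mul_right_comm, ENNReal.inv_mul_cancel hL (sl_ne_top hXR he x), one_mul]

/-- the product-measurable auxiliary function. -/
lemma F_meas {g : E → ℝ≥0∞} (hg : Measurable g) {W : Set ℝ} (hW : MeasurableSet W)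
    (e : E) :
    Measurable (Function.uncurry fun (x : E) (t : ℝ) =>
      W.indicator (fun _ => (1 : ℝ≥0∞)) t * g (x + t • e)) := by
  apply Measurable.mul
  · exact (measurable_one.indicator hW).comp measurable_snd
  · exact hg.comp (meas_param2 e)

lemma inner_rw {g : E → ℝ≥0∞} {W : Set ℝ} (hW : MeasurableSet W) (e x : E) :
    ∫⁻ t : ℝ, W.indicator (fun _ => (1 : ℝ≥0∞)) t * g (x + t • e) =
      ∫⁻ t in W, g (x + t • e) := by
  rw [← lintegral_indicator hW]
  refine lintegral_congr fun t => ?_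
  by_cases h : t ∈ W <;> simp [h]

lemma meas_window {g : E → ℝ≥0∞} (hg : Measurable g) {W : Set ℝ}
    (hW : MeasurableSet W) (e : E) :
    Measurable fun x : E => ∫⁻ t in W, g (x + t • e) := by
  have h : (fun x : E => ∫⁻ t in W, g (x + t • e)) =
      fun x => ∫⁻ t : ℝ, W.indicator (fun _ => (1 : ℝ≥0∞)) t * g (x + t • e) :=
    funext fun x => (inner_rw hW e x).symm
  rw [h]
  exact Measurable.lintegral_prod_right (F_meas hg hW e)

lemma tonelli_window {g : E → ℝ≥0∞} (hg : Measurable g) {W : Set ℝ}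
    (hW : MeasurableSet W) (e : E) :
    ∫⁻ x : E, ∫⁻ t in W, g (x + t • e) = volume W * ∫⁻ y, g y := by
  calc ∫⁻ x : E, ∫⁻ t in W, g (x + t • e)
      = ∫⁻ x : E, ∫⁻ t : ℝ, W.indicator (fun _ => (1:ℝ≥0∞)) t * g (x + t • e) :=
        lintegral_congr fun x => (inner_rw hW e x).symm
    _ = ∫⁻ t : ℝ, ∫⁻ x : E, W.indicator (fun _ => (1:ℝ≥0∞)) t * g (x + t • e) :=
        lintegral_lintegral_swap (F_meas hg hW e).aemeasurable
    _ = ∫⁻ t : ℝ, W.indicator (fun _ => (1:ℝ≥0∞)) t * ∫⁻ x : E, g (x + t • e) :=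
        lintegral_congr fun t =>
          lintegral_const_mul _ (hg.comp (measurable_id.add_const (t • e)))
    _ = ∫⁻ t : ℝ, W.indicator (fun _ => (1:ℝ≥0∞)) t * ∫⁻ y, g y :=
        lintegral_congr fun t => by rw [lintegral_add_right_eq_self g (t • e)]
    _ = (∫⁻ t : ℝ, W.indicator (fun _ => (1:ℝ≥0∞)) t) * ∫⁻ y, g y :=
        lintegral_mul_const _ (measurable_one.indicator hW)
    _ = volume W * ∫⁻ y, g y := by
        congr 1
        exact lintegral_indicator_one hW

lemma windowB {R : ℝ} {X : Set E} (hX : MeasurableSet X)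
    (hXR : X ⊆ Metric.closedBall 0 R) {e : E} (he : ‖e‖ = 1)
    {g g' : E → ℝ≥0∞}
    (hgle : ∀ y, g y ≤ X.indicator 1 y) (hg'le : ∀ y, g' y ≤ X.indicator 1 y)
    (hll : ∀ x, ∫⁻ t : ℝ, g (x + t • e) = ∫⁻ t : ℝ, g' (x + t • e))
    {n : ℝ} (x : E) :
    ∫⁻ t in Icc (-n) n, g (x + t • e) ≤
      (∫⁻ t in Icc (-n) n, g' (x + t • e)) +
      ∫⁻ t in Icc (-n) n \ Icc (-(n - 2*R)) (n - 2*R), X.indicator 1 (x + t • e) := by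
  set S := {s : ℝ | x + s • e ∈ X} with hS
  have hSmeas : MeasurableSet S := meas_param e x hX
  by_cases hsub : S ⊆ Icc (-n) n
  · have h0 : ∀ h : E → ℝ≥0∞, (∀ y, h y ≤ X.indicator 1 y) →
        ∫⁻ t in (Icc (-n) n)ᶜ, h (x + t • e) = 0 := by
      intro h hh
      have hz : ∀ t ∈ (Icc (-n) n)ᶜ, h (x + t • e) = (0 : ℝ≥0∞) := by
        intro t ht
        have hnx : x + t • e ∉ X := fun hmem => ht (hsub hmem)
        have := hh (x + t • e)
        rw [Set.indicator_of_notMem hnx] at this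
        exact le_antisymm this zero_le
      rw [setLIntegral_congr_fun measurableSet_Icc.compl
        hz, lintegral_zero]
    have hfull : ∀ h : E → ℝ≥0∞, (∀ y, h y ≤ X.indicator 1 y) →
        ∫⁻ t in Icc (-n) n, h (x + t • e) = ∫⁻ t : ℝ, h (x + t • e) := by
      intro h hh
      have := lintegral_add_compl (μ := volume) (fun t : ℝ => h (x + t • e))
        (measurableSet_Icc (a := -n) (b := n))
      rw [h0 h hh, add_zero] at this
      exact this
    rw [hfull g hgle, hfull g' hg'le, hll x]
    exact le_self_add
  · obtain ⟨s, hsS, hs⟩ := not_subset.mp hsub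
    have habs : n < |s| := by
      by_contra hc
      push_neg at hc
      exact hs (by rw [mem_Icc]; exact abs_le.mp hc)
    have hdiam : ∀ t ∈ S, |s - t| ≤ 2 * R := by
      intro t htS
      have h1 : ‖x + s • e‖ ≤ R := by
        simpa [Metric.mem_closedBall, dist_zero_right] using hXR hsS
      have h2 : ‖x + t • e‖ ≤ R := by
        simpa [Metric.mem_closedBall, dist_zero_right] using hXR htS
      have h3 : |s - t| = ‖(x + s • e) - (x + t • e)‖ := by
        rw [show (x + s • e) - (x + t • e) = (s - t) • e by rw [sub_smul]; abel,
          norm_smul, he, Real.norm_eq_abs, mul_one]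
      have h4 : ‖(x + s • e) - (x + t • e)‖ ≤ ‖x + s • e‖ + ‖x + t • e‖ :=
        norm_sub_le _ _
      linarith [h3 ▸ h4]
    have hins : S ∩ Icc (-n) n ⊆ S ∩ (Icc (-n) n \ Icc (-(n - 2*R)) (n - 2*R)) := by
      rintro t ⟨htS, htI⟩
      refine ⟨htS, htI, fun htI2 => ?_⟩
      have h1 : |t| ≤ n - 2*R := abs_le.mpr htI2
      have h2 := hdiam t htS
      have h3 : |s| ≤ |s - t| + |t| := by
        calc |s| = |(s - t) + t| := by norm_num
          _ ≤ |s - t| + |t| := abs_add_le _ _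
      linarith
    have hb : ∀ t : ℝ, g (x + t • e) ≤ S.indicator (fun _ => (1:ℝ≥0∞)) t := by
      intro t
      exact le_trans (hgle (x + t • e)) (le_of_eq (indicator_line e x t))
    calc ∫⁻ t in Icc (-n) n, g (x + t • e)
        ≤ ∫⁻ t in Icc (-n) n, S.indicator (fun _ => (1:ℝ≥0∞)) t :=
          lintegral_mono fun t => hb t
      _ = volume (S ∩ Icc (-n) n) := by
          rw [← Measure.restrict_apply hSmeas]
          exact lintegral_indicator_one hSmeas
      _ ≤ volume (S ∩ (Icc (-n) n \ Icc (-(n - 2*R)) (n - 2*R))) :=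
          measure_mono hins
      _ = ∫⁻ t in Icc (-n) n \ Icc (-(n - 2*R)) (n - 2*R),
            S.indicator (fun _ => (1:ℝ≥0∞)) t := by
          rw [← Measure.restrict_apply hSmeas]
          exact (lintegral_indicator_one hSmeas).symm
      _ = ∫⁻ t in Icc (-n) n \ Icc (-(n - 2*R)) (n - 2*R),
            X.indicator 1 (x + t • e) :=
          lintegral_congr fun t => (indicator_line e x t).symm
      _ ≤ _ := le_add_self

lemma Bn_small {R n : ℝ} (hR : 0 ≤ R) (hn : 2*R ≤ n) :
    volume (Icc (-n) n \ Icc (-(n - 2*R)) (n - 2*R)) ≤ ENNReal.ofReal (4*R) := by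
  have hsub : Icc (-n) n \ Icc (-(n - 2*R)) (n - 2*R) ⊆
      Icc (-n) (-(n - 2*R)) ∪ Icc (n - 2*R) n := by
    rintro t ⟨⟨h1, h2⟩, hnot⟩
    simp only [mem_Icc, not_and_or, not_le] at hnot
    rcases hnot with h | h
    · exact Or.inl ⟨h1, h.le⟩
    · exact Or.inr ⟨h.le, h2⟩
  calc volume (Icc (-n) n \ Icc (-(n - 2*R)) (n - 2*R))
      ≤ volume (Icc (-n) (-(n - 2*R)) ∪ Icc (n - 2*R) n) := measure_mono hsub
    _ ≤ volume (Icc (-n) (-(n - 2*R))) + volume (Icc (n - 2*R) n) :=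
        measure_union_le _ _
    _ = ENNReal.ofReal (2*R) + ENNReal.ofReal (2*R) := by
        rw [Real.volume_Icc, Real.volume_Icc]
        congr 1 <;> ring_nf
    _ = ENNReal.ofReal (4*R) := by
        rw [← ENNReal.ofReal_add (by linarith) (by linarith)]
        congr 1; ring

lemma main_ineq {R : ℝ} {X : Set E} (hX : MeasurableSet X) (hR : 0 < R)
    (hXR : X ⊆ Metric.closedBall 0 R) {e : E} (he : ‖e‖ = 1)
    {g g' : E → ℝ≥0∞} (hg : Measurable g) (hg' : Measurable g')
    (hgle : ∀ y, g y ≤ X.indicator 1 y) (hg'le : ∀ y, g' y ≤ X.indicator 1 y)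
    (hll : ∀ x, ∫⁻ t : ℝ, g (x + t • e) = ∫⁻ t : ℝ, g' (x + t • e))
    {n : ℝ} (hn : 2*R ≤ n) :
    ENNReal.ofReal (2*n) * ∫⁻ y, g y ≤
      ENNReal.ofReal (2*n) * (∫⁻ y, g' y) + ENNReal.ofReal (4*R) * volume X := by
  have hWvol : volume (Icc (-n) n) = ENNReal.ofReal (2*n) := by
    rw [Real.volume_Icc]; congr 1; ring
  have hBmeas : MeasurableSet (Icc (-n) n \ Icc (-(n - 2*R)) (n - 2*R)) :=
    measurableSet_Icc.diff measurableSet_Icc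
  have hXind : Measurable (X.indicator (1 : E → ℝ≥0∞)) :=
    measurable_one.indicator hX
  calc ENNReal.ofReal (2*n) * ∫⁻ y, g y
      = ∫⁻ x : E, ∫⁻ t in Icc (-n) n, g (x + t • e) := by
        rw [tonelli_window hg measurableSet_Icc e, hWvol]
    _ ≤ ∫⁻ x : E, ((∫⁻ t in Icc (-n) n, g' (x + t • e)) +
          ∫⁻ t in Icc (-n) n \ Icc (-(n - 2*R)) (n - 2*R), X.indicator 1 (x + t • e)) :=
        lintegral_mono fun x => windowB hX hXR he hgle hg'le hll x
    _ = (∫⁻ x : E, ∫⁻ t in Icc (-n) n, g' (x + t • e)) +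
          ∫⁻ x : E, ∫⁻ t in Icc (-n) n \ Icc (-(n - 2*R)) (n - 2*R),
            X.indicator 1 (x + t • e) :=
        lintegral_add_left (meas_window hg' measurableSet_Icc e) _
    _ = ENNReal.ofReal (2*n) * (∫⁻ y, g' y) +
          volume (Icc (-n) n \ Icc (-(n - 2*R)) (n - 2*R)) *
            ∫⁻ y, X.indicator (1 : E → ℝ≥0∞) y := by
        rw [tonelli_window hg' measurableSet_Icc e, hWvol,
          tonelli_window hXind hBmeas e]
    _ ≤ ENNReal.ofReal (2*n) * (∫⁻ y, g' y) + ENNReal.ofReal (4*R) * volume X := by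
        apply add_le_add_right
        apply mul_le_mul' (Bn_small hR.le hn)
        rw [lintegral_indicator_one hX]

lemma cancel_limit {R : ℝ} (hR : 0 < R) (a b C : ℝ≥0∞) (hb : b ≠ ∞) (hC : C ≠ ∞)
    (h : ∀ n : ℝ, 2*R ≤ n → ENNReal.ofReal (2*n) * a ≤ ENNReal.ofReal (2*n) * b + C) :
    a ≤ b := by
  refine ENNReal.le_of_forall_pos_le_add fun ε hε _ => ?_
  set n : ℝ := max (2*R) (C.toReal / (ε : ℝ)) with hn
  have hn1 : 2*R ≤ n := le_max_left _ _
  have hn0 : 0 < n := lt_of_lt_of_le (by linarith) hn1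
  have hCle : C ≤ ENNReal.ofReal (2*n) * (ε : ℝ≥0∞) := by
    have hεpos : (0:ℝ) < (ε:ℝ) := hε
    have h1 : C.toReal ≤ 2*n*(ε:ℝ) := by
      have h2 : C.toReal / (ε:ℝ) ≤ n := le_max_right _ _
      have h3 : C.toReal ≤ n * (ε:ℝ) := by
        rw [div_le_iff₀ hεpos] at h2; linarith
      nlinarith [C.toReal_nonneg, mul_nonneg hn0.le hεpos.le]
    calc C = ENNReal.ofReal C.toReal := (ENNReal.ofReal_toReal hC).symm
      _ ≤ ENNReal.ofReal (2*n*(ε:ℝ)) := ENNReal.ofReal_le_ofReal h1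
      _ = ENNReal.ofReal (2*n) * ENNReal.ofReal (ε:ℝ) :=
          ENNReal.ofReal_mul (by linarith)
      _ = ENNReal.ofReal (2*n) * (ε : ℝ≥0∞) := by
          rw [ENNReal.ofReal_coe_nnreal]
  have hmain := h n hn1
  have h2 : ENNReal.ofReal (2*n) * a ≤ ENNReal.ofReal (2*n) * (b + (ε : ℝ≥0∞)) := by
    rw [mul_add]
    exact le_trans hmain (add_le_add_right hCle _)
  have h0 : ENNReal.ofReal (2*n) ≠ 0 := by
    simp only [ne_eq, ENNReal.ofReal_eq_zero, not_le]; linarith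
  exact (ENNReal.mul_le_mul_iff_right h0 ENNReal.ofReal_ne_top).mp h2

end ChordAux

/-- The uniform measure on a compact convex body `X ⊂ ℝ^d` is invariant under the
one-dimensional resampling kernel `T_e(x, ·) = ν_{x,e}` along a fixed unit direction `e`. -/
theorem uniform_invariant_chord_kernel
    {d : ℕ} (X : Set (EuclideanSpace ℝ (Fin d)))
    (hXc : IsCompact X) (hXconv : Convex ℝ X) (hXint : (interior X).Nonempty)
    (e : EuclideanSpace ℝ (Fin d)) (he : ‖e‖ = 1) :
    ∀ A : Set (EuclideanSpace ℝ (Fin d)), MeasurableSet A →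
      uniformOn X A = ∫⁻ x, chordMeasure X e x A ∂(uniformOn X) := by
  intro A hA
  obtain ⟨R, hR, hXR⟩ := hXc.isBounded.subset_closedBall_lt 0 0
  have hX : MeasurableSet X := hXc.isClosed.measurableSet
  set g₁ : EuclideanSpace ℝ (Fin d) → ℝ≥0∞ :=
    X.indicator (fun y => chordMeasure X e y A) with hg₁
  set g₂ : EuclideanSpace ℝ (Fin d) → ℝ≥0∞ := (X ∩ A).indicator 1 with hg₂
  have hg₁meas : Measurable g₁ := (ChordAux.chord_meas hX e hA).indicator hX
  have hg₂meas : Measurable g₂ := measurable_one.indicator (hX.inter hA)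
  have hg₁le : ∀ y, g₁ y ≤ X.indicator 1 y := by
    intro y
    by_cases hy : y ∈ X
    · rw [hg₁, Set.indicator_of_mem hy, Set.indicator_of_mem hy]
      exact ChordAux.chord_le_one hXR he hA y
    · rw [hg₁, Set.indicator_of_notMem hy, Set.indicator_of_notMem hy]
  have hg₂le : ∀ y, g₂ y ≤ X.indicator 1 y := fun y =>
    Set.indicator_le_indicator_of_subset inter_subset_left (fun _ => zero_le) y
  have hll : ∀ x, ∫⁻ t : ℝ, g₁ (x + t • e) = ∫⁻ t : ℝ, g₂ (x + t • e) := by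
    intro x
    rw [hg₁, hg₂, ChordAux.line_integral_chord hX hXR he hA x,
      ChordAux.line_integral_indicator (hX.inter hA) e x]
  have hfin : ∀ gg : EuclideanSpace ℝ (Fin d) → ℝ≥0∞,
      (∀ y, gg y ≤ X.indicator 1 y) → ∫⁻ y, gg y ≠ ∞ := by
    intro gg hgg
    have h1 : ∫⁻ y, gg y ≤ volume X := by
      calc ∫⁻ y, gg y
          ≤ ∫⁻ y, X.indicator (1 : EuclideanSpace ℝ (Fin d) → ℝ≥0∞) y :=
            lintegral_mono hgg
        _ = volume X := lintegral_indicator_one hX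
    exact ne_top_of_le_ne_top hXc.measure_ne_top h1
  have hC : ENNReal.ofReal (4*R) * volume X ≠ ∞ :=
    ENNReal.mul_ne_top ENNReal.ofReal_ne_top hXc.measure_ne_top
  have key : ∫⁻ y, g₁ y = ∫⁻ y, g₂ y := by
    apply le_antisymm
    · exact ChordAux.cancel_limit hR _ _ _ (hfin g₂ hg₂le) hC fun n hn =>
        ChordAux.main_ineq hX hR hXR he hg₁meas hg₂meas hg₁le hg₂le hll hn
    · exact ChordAux.cancel_limit hR _ _ _ (hfin g₁ hg₁le) hC fun n hn =>
        ChordAux.main_ineq hX hR hXR he hg₂meas hg₁meas hg₂le hg₁le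
          (fun x => (hll x).symm) hn
  have hRHS : ∫⁻ x, chordMeasure X e x A ∂(uniformOn X) =
      (volume X)⁻¹ * ∫⁻ y, g₁ y := by
    rw [uniformOn, lintegral_smul_measure, hg₁, lintegral_indicator hX, smul_eq_mul]
  rw [hRHS, key, hg₂, lintegral_indicator_one (hX.inter hA)]
  rw [uniformOn, Measure.smul_apply, smul_eq_mul, Measure.restrict_apply hA,
    inter_comm]
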